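/- arXiv:2404.18808 — 9 statements merged into one kernel-verified Lean document; each statement's English description precedes it below -/
import Mathlib

section
/- Let q ≡ 1 (mod 3) and m := (q-1)/3. The number of nonnegative integers not contained in the numerical semigroup H generated by {q, q+1} ∪ {(q-1) + j(q-2) : j = 0, …, m-1} is at most (q²-q)/6. -/
set_option maxHeartbeats 1000000 in
theorem stmt2 (q : ℕ) (hq : ∃ p n : ℕ, Nat.Prime p ∧ 0 < n ∧ q = p ^ n)
    (hmod : q % 3 = 1) (h4 : 4 ≤ q) :
    {n : ℕ | n ∉ AddSubmonoid.closure
        (({q, q + 1} : Set ℕ) ∪ {x : ℕ | ∃ j : ℕ, j < (q - 1) / 3 ∧ x = (q - 1) + j * (q - 2)})}.ncard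
      ≤ (q ^ 2 - q) / 6 := by
  clear hq
  obtain ⟨m, hq3, hm1⟩ : ∃ m, q = 3 * m + 1 ∧ 1 ≤ m := ⟨(q - 1) / 3, by omega, by omega⟩
  have hm3 : (q - 1) / 3 = m := by omega
  simp only [hm3]
  set s : Set ℕ := ({q, q + 1} : Set ℕ) ∪ {x : ℕ | ∃ j : ℕ, j < m ∧ x = (q - 1) + j * (q - 2)}
    with hs
  have hqH : q ∈ AddSubmonoid.closure s :=
    AddSubmonoid.subset_closure (Or.inl (by simp))
  have hq1H : q + 1 ∈ AddSubmonoid.closure s :=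
    AddSubmonoid.subset_closure (Or.inl (by simp))
  have hgen : ∀ j, j < m → (q - 1) + j * (q - 2) ∈ AddSubmonoid.closure s := fun j hj =>
    AddSubmonoid.subset_closure (Or.inr ⟨j, hj, rfl⟩)
  have hm1' : m - 1 < m := by omega
  have hm0 : 0 < m := hm1
  have hcomb : ∀ b a c₁ c₂ c₃ j, j < m →
      b * q + a * (q + 1) + c₁ * ((q - 1) + (m - 1) * (q - 2))
        + c₂ * ((q - 1) + j * (q - 2)) + c₃ * ((q - 1) + 0 * (q - 2))
        ∈ AddSubmonoid.closure s := by
    intro b a c₁ c₂ c₃ j hj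
    refine add_mem (add_mem (add_mem (add_mem ?_ ?_) ?_) ?_) ?_
    · simpa [smul_eq_mul] using nsmul_mem hqH b
    · simpa [smul_eq_mul] using nsmul_mem hq1H a
    · simpa [smul_eq_mul] using nsmul_mem (hgen (m - 1) hm1') c₁
    · simpa [smul_eq_mul] using nsmul_mem (hgen j hj) c₂
    · simpa [smul_eq_mul] using nsmul_mem (hgen 0 hm0) c₃
  set G : Finset ℕ :=
    (Finset.range m).biUnion (fun S => Finset.Ioc (S * (q + 1)) ((S + 1) * (q - 2))) with hG
  have hsub : {n : ℕ | n ∉ AddSubmonoid.closure s} ⊆ ↑G := by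
    intro n hn
    simp only [Set.mem_setOf_eq] at hn
    by_contra hg
    apply hn
    have hgap : ∀ t, t < m → t * (q + 1) < n → (t + 1) * (q - 2) < n := by
      intro t ht h1
      by_contra h2
      push_neg at h2
      exact hg (Finset.mem_coe.mpr (Finset.mem_biUnion.mpr
        ⟨t, Finset.mem_range.mpr ht, Finset.mem_Ioc.mpr ⟨h1, h2⟩⟩))
    rcases Nat.eq_zero_or_pos n with h0 | h0
    · rw [h0]; exact zero_mem _
    obtain ⟨S, hiS⟩ : ∃ S, S = (n + q) / (q + 1) := ⟨_, rfl⟩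
    have hdm := Nat.div_add_mod (n + q) (q + 1)
    have hmod' : (n + q) % (q + 1) < q + 1 := Nat.mod_lt _ (by omega)
    rw [← hiS] at hdm
    have hup : n ≤ S * (q + 1) := by nlinarith [hdm, hmod']
    have hlow : S * (q + 1) ≤ n + q := by nlinarith [hdm, Nat.zero_le ((n + q) % (q + 1))]
    have hS1 : 1 ≤ S := by
      rcases Nat.eq_zero_or_pos S with h | h
      · rw [h] at hup; simp at hup; omega
      · exact h
    by_cases hc : S * q ≤ n
    · have ha : n - S * q ≤ S := by
        zify [hc]
        zify at hup
        nlinarith [hup]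
      have hEq : n = (S - (n - S * q)) * q + (n - S * q) * (q + 1)
          + 0 * ((q - 1) + (m - 1) * (q - 2)) + 0 * ((q - 1) + 0 * (q - 2))
          + 0 * ((q - 1) + 0 * (q - 2)) := by
        zify [hc, ha, show 1 ≤ q by omega, show 2 ≤ q by omega]
        ring
      rw [hEq]
      exact hcomb _ _ 0 0 0 0 hm0
    · push_neg at hc
      obtain ⟨D, hiD⟩ : ∃ D, D = S * q - n := ⟨_, rfl⟩
      have hD1 : 0 < D := by rw [hiD]; exact Nat.sub_pos_of_lt hc
      have hD : n + D = S * q := by rw [hiD]; exact Nat.add_sub_cancel' hc.le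
      have hDz : (n : ℤ) + D = S * q := by exact_mod_cast hD
      have hlow2 : (S - 1) * (q + 1) < n := by
        zify [hS1]
        zify at hlow
        linarith
      have hkey : D ≤ 2 * m ∧ D + 1 ≤ 2 * S := by
        by_cases hSm : S ≤ m
        · have hup2 : S * (q - 2) < n := by
            have h1 := hgap (S - 1) (by omega) hlow2
            have h2 : S - 1 + 1 = S := by omega
            rwa [h2] at h1
          have hDb : D + 1 ≤ 2 * S := by
            zify [show 2 ≤ q by omega] at hup2
            zify
            linarith [hDz]
          exact ⟨by omega, hDb⟩
        · push_neg at hSm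
          have hq2 : D + S ≤ q := by
            zify [hS1] at hlow2
            zify
            linarith [hDz]
          exact ⟨by omega, by omega⟩
      obtain ⟨hDa, hDb⟩ := hkey
      rcases Nat.even_or_odd D with ⟨t, ht⟩ | ⟨j, hj⟩
      · have ht1 : 1 ≤ t := by omega
        have htm : t - 1 < m := by omega
        have htS : t + 1 ≤ S := by omega
        have hEq : n = (S - (t + 1)) * q + 0 * (q + 1)
            + 0 * ((q - 1) + (m - 1) * (q - 2))
            + 1 * ((q - 1) + (t - 1) * (q - 2)) + 1 * ((q - 1) + 0 * (q - 2)) := by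
          have htz : (D : ℤ) = t + t := by exact_mod_cast ht
          zify [htS, ht1, show 1 ≤ q by omega, show 2 ≤ q by omega]
          linarith [hDz, htz]
        rw [hEq]
        exact hcomb _ 0 0 1 1 (t - 1) htm
      · have hjm : j < m := by omega
        have hjS : j + 1 ≤ S := by omega
        have hEq : n = (S - (j + 1)) * q + 0 * (q + 1)
            + 0 * ((q - 1) + (m - 1) * (q - 2))
            + 1 * ((q - 1) + j * (q - 2)) + 0 * ((q - 1) + 0 * (q - 2)) := by
          have hjz : (D : ℤ) = 2 * j + 1 := by exact_mod_cast hj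
          zify [hjS, show 1 ≤ q by omega, show 2 ≤ q by omega]
          linarith [hDz, hjz]
        rw [hEq]
        exact hcomb _ 0 0 1 0 j hjm
  have h1 : {n : ℕ | n ∉ AddSubmonoid.closure s}.ncard ≤ G.card := by
    have := Set.ncard_le_ncard hsub G.finite_toSet
    simpa [Set.ncard_coe_finset] using this
  refine h1.trans ?_
  have hqz : (q : ℤ) = 3 * m + 1 := by exact_mod_cast hq3
  have h2 : G.card ≤ ∑ S ∈ Finset.range m, (3 * m - 1 - 3 * S) := by
    refine (Finset.card_biUnion_le).trans ?_
    refine Finset.sum_le_sum fun S hS => ?_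
    rw [Nat.card_Ioc]
    have hSm : S + 1 ≤ m := Finset.mem_range.mp hS
    rw [Nat.sub_le_iff_le_add]
    zify [show (1:ℕ) ≤ 3 * m by omega, show 3 * S ≤ 3 * m - 1 by omega,
      show 2 ≤ q by omega]
    nlinarith [hqz]
  refine h2.trans ?_
  have h3 : ∑ S ∈ Finset.range m, (3 * m - 1 - 3 * S)
      = ∑ S ∈ Finset.range m, (3 * S + 2) := by
    rw [← Finset.sum_range_reflect]
    refine Finset.sum_congr rfl fun S hS => ?_
    have := Finset.mem_range.mp hS
    omega
  rw [h3]
  have hgauss := Finset.sum_range_id_mul_two m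
  have hsum2 : ∑ S ∈ Finset.range m, (3 * S + 2)
      = 3 * (∑ S ∈ Finset.range m, S) + 2 * m := by
    rw [Finset.sum_add_distrib, ← Finset.mul_sum]
    simp [Finset.sum_const, Finset.card_range, mul_comm]
  rw [hsum2]
  rw [Nat.le_div_iff_mul_le (by norm_num : (0:ℕ) < 6)]
  zify [hm1] at hgauss
  zify [show q ≤ q ^ 2 by nlinarith]
  have hq2z : (q : ℤ) ^ 2 = 9 * (m:ℤ) ^ 2 + 6 * m + 1 := by rw [hqz]; ring
  nlinarith [hgauss, hq2z, hqz]
end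

section
/- Let F be a field of characteristic different from 3 containing a primitive cube root of unity ζ₃, and for i ∈ ℤ define the rational functions P_i(s) = ((s+ζ₃)^{3i} - (s+ζ₃²)^{3i}) / (3(ζ₃-ζ₃²) s (s-1)) over F. Then for all integers i, j, ℓ: P_i(s)·P_{ℓ+j}(s) − P_j(s)·P_{ℓ+i}(s) = (s²−s+1)^{3j}·P_{i−j}(s)·P_ℓ(s), as identities of rational functions in F(s). -/
private lemma stmt5_key {K : Type*} [Field K] (A A' B B' Cc C' D : K)
    (hB : B ≠ 0) (hB' : B' ≠ 0) (hD : D ≠ 0) :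
    (A - A') / D * ((Cc * B - C' * B') / D) - (B - B') / D * ((Cc * A - C' * A') / D)
      = B * B' * ((A / B - A' / B') / D) * ((Cc - C') / D) := by
  field_simp
  ring

theorem stmt5 (F : Type*) [Field F] (h3 : ringChar F ≠ 3)
    (ζ : F) (hζ : IsPrimitiveRoot ζ 3)
    (P : ℤ → RatFunc F)
    (hP : ∀ i : ℤ, P i =
      ((RatFunc.X + RatFunc.C ζ) ^ (3 * i) - (RatFunc.X + RatFunc.C (ζ ^ 2)) ^ (3 * i)) /
        (3 * (RatFunc.C ζ - RatFunc.C (ζ ^ 2)) * RatFunc.X * (RatFunc.X - 1)))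
    (i j ℓ : ℤ) :
    P i * P (ℓ + j) - P j * P (ℓ + i) =
      (RatFunc.X ^ 2 - RatFunc.X + 1) ^ (3 * j) * P (i - j) * P ℓ := by
  have h3F : (3 : F) ≠ 0 := by
    intro h
    have hd : ringChar F ∣ 3 := (ringChar.spec F 3).mp (by exact_mod_cast h)
    rcases Nat.prime_three.eq_one_or_self_of_dvd _ hd with h1 | h1
    · have h2 := CharP.cast_eq_zero F (ringChar F)
      rw [h1] at h2; simp at h2
    · exact h3 h1
  have hζ3 : ζ ^ 3 = 1 := hζ.pow_eq_one
  have hζ1 : ζ ≠ 1 := hζ.ne_one (by norm_num)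
  have hζ0 : ζ ≠ 0 := by intro h; rw [h] at hζ3; simp at hζ3
  have hsum : ζ ^ 2 + ζ + 1 = 0 := by
    have h0 : (ζ - 1) * (ζ ^ 2 + ζ + 1) = 0 := by linear_combination hζ3
    rcases mul_eq_zero.mp h0 with h | h
    · exact absurd (sub_eq_zero.mp h) hζ1
    · exact h
  have hne : ζ - ζ ^ 2 ≠ 0 := by
    intro h
    have h' : ζ * (1 - ζ) = 0 := by linear_combination h
    rcases mul_eq_zero.mp h' with h'' | h''
    · exact hζ0 h''
    · exact hζ1 (sub_eq_zero.mp h'').symm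
  have h3K : (3 : RatFunc F) ≠ 0 := by
    rw [← map_ofNat (RatFunc.C : F →+* RatFunc F) 3]
    exact (map_ne_zero _).mpr h3F
  have hCne : RatFunc.C ζ - RatFunc.C (ζ ^ 2) ≠ 0 := by
    rw [← map_sub]
    exact (map_ne_zero _).mpr hne
  have hX : (RatFunc.X : RatFunc F) ≠ 0 := RatFunc.X_ne_zero
  have hX1 : (RatFunc.X - 1 : RatFunc F) ≠ 0 := by
    have h : (RatFunc.X - 1 : RatFunc F) = algebraMap (Polynomial F) _ (Polynomial.X - 1) := by
      push_cast [map_sub]; simp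
    rw [h]
    exact RatFunc.algebraMap_ne_zero (by simpa using Polynomial.X_sub_C_ne_zero (1 : F))
  have haux : ∀ c : F, (RatFunc.X + RatFunc.C c : RatFunc F) ≠ 0 := by
    intro c
    have h : (RatFunc.X + RatFunc.C c : RatFunc F)
        = algebraMap (Polynomial F) _ (Polynomial.X + Polynomial.C c) := by simp
    rw [h]
    exact RatFunc.algebraMap_ne_zero (Polynomial.X_add_C_ne_zero c)
  have ha : (RatFunc.X + RatFunc.C ζ : RatFunc F) ≠ 0 := haux ζ
  have hb : (RatFunc.X + RatFunc.C (ζ ^ 2) : RatFunc F) ≠ 0 := haux (ζ ^ 2)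
  have h1 : RatFunc.C ζ * RatFunc.C (ζ ^ 2) = (1 : RatFunc F) := by
    rw [← map_mul, show ζ * ζ ^ 2 = 1 by linear_combination hζ3, map_one]
  have h2 : RatFunc.C ζ + RatFunc.C (ζ ^ 2) = (-1 : RatFunc F) := by
    rw [← map_add, show ζ + ζ ^ 2 = -1 by linear_combination hsum]
    simp
  have hab : (RatFunc.X + RatFunc.C ζ) * (RatFunc.X + RatFunc.C (ζ ^ 2))
      = (RatFunc.X ^ 2 - RatFunc.X + 1 : RatFunc F) := by
    linear_combination RatFunc.X * h2 + h1
  have haj : (RatFunc.X + RatFunc.C ζ : RatFunc F) ^ (3 * j) ≠ 0 := zpow_ne_zero _ ha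
  have hbj : (RatFunc.X + RatFunc.C (ζ ^ 2) : RatFunc F) ^ (3 * j) ≠ 0 := zpow_ne_zero _ hb
  have hD : (3 * (RatFunc.C ζ - RatFunc.C (ζ ^ 2)) * RatFunc.X * (RatFunc.X - 1) : RatFunc F) ≠ 0 :=
    mul_ne_zero (mul_ne_zero (mul_ne_zero h3K hCne) hX) hX1
  simp only [hP]
  rw [← hab, mul_zpow,
    show 3 * (ℓ + j) = 3 * ℓ + 3 * j by ring,
    show 3 * (ℓ + i) = 3 * ℓ + 3 * i by ring,
    show 3 * (i - j) = 3 * i - 3 * j by ring]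
  simp only [zpow_add₀ ha, zpow_add₀ hb, zpow_sub₀ ha, zpow_sub₀ hb]
  exact stmt5_key _ _ _ _ _ _ _ haj hbj hD
end

section
/- Let F be a field of characteristic different from 3 containing a primitive cube root of unity ζ₃. Define P_i(s) = ((s+ζ₃)^{3i} - (s+ζ₃²)^{3i})/(3(ζ₃-ζ₃²)s(s-1)) and Q_i(s) = (((1-ζ₃)/3)(s+ζ₃)^{3i-1} + ((1-ζ₃²)/3)(s+ζ₃²)^{3i-1})/(s-1). Then for all integers i, j, ℓ: P_i(s)·Q_{ℓ+j}(s) − P_j(s)·Q_{ℓ+i}(s) = (s²−s+1)^{3j}·P_{i−j}(s)·Q_ℓ(s) in F(s). -/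
set_option maxHeartbeats 1000000 in
theorem stmt6 (F : Type*) [Field F] (h3 : ringChar F ≠ 3)
    (ζ : F) (hζ : IsPrimitiveRoot ζ 3)
    (P Q : ℤ → RatFunc F)
    (hP : ∀ i : ℤ, P i =
      ((RatFunc.X + RatFunc.C ζ) ^ (3 * i) - (RatFunc.X + RatFunc.C (ζ ^ 2)) ^ (3 * i)) /
        (3 * (RatFunc.C ζ - RatFunc.C (ζ ^ 2)) * RatFunc.X * (RatFunc.X - 1)))
    (hQ : ∀ i : ℤ, Q i =
      (RatFunc.C ((1 - ζ) / 3) * (RatFunc.X + RatFunc.C ζ) ^ (3 * i - 1) +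
        RatFunc.C ((1 - ζ ^ 2) / 3) * (RatFunc.X + RatFunc.C (ζ ^ 2)) ^ (3 * i - 1)) /
        (RatFunc.X - 1))
    (i j ℓ : ℤ) :
    P i * Q (ℓ + j) - P j * Q (ℓ + i) =
      (RatFunc.X ^ 2 - RatFunc.X + 1) ^ (3 * j) * P (i - j) * Q ℓ := by
  have hζ3 : ζ ^ 3 = 1 := hζ.pow_eq_one
  have hζ1 : ζ ≠ 1 := hζ.ne_one (by norm_num)
  have hζ0 : ζ ≠ 0 := hζ.ne_zero (by norm_num)
  have h3F : (3 : F) ≠ 0 := by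
    intro h
    exact h3 <| Or.resolve_left
      ((Nat.dvd_prime Nat.prime_three).1 (ringChar.dvd (by exact_mod_cast h)))
      CharP.ringChar_ne_one
  have hζsum : ζ ^ 2 + ζ + 1 = 0 := by
    have : (ζ - 1) * (ζ ^ 2 + ζ + 1) = 0 := by ring_nf; linear_combination hζ3
    rcases mul_eq_zero.1 this with h | h
    · exact absurd (sub_eq_zero.1 h) hζ1
    · exact h
  have hζne : ζ ≠ ζ ^ 2 := by
    intro h
    have : ζ * (ζ - 1) = 0 := by linear_combination -h
    rcases mul_eq_zero.1 this with h' | h'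
    · exact hζ0 h'
    · exact hζ1 (sub_eq_zero.1 h')
  -- nonzeroness in RatFunc
  set a : RatFunc F := RatFunc.X + RatFunc.C ζ with ha_def
  set b : RatFunc F := RatFunc.X + RatFunc.C (ζ ^ 2) with hb_def
  have halg : ∀ c : F, (RatFunc.X + RatFunc.C c : RatFunc F) =
      algebraMap (Polynomial F) (RatFunc F) (Polynomial.X + Polynomial.C c) := by
    intro c
    rw [map_add, RatFunc.algebraMap_X, RatFunc.algebraMap_C]
  have ha : a ≠ 0 := by
    rw [ha_def, halg]
    exact RatFunc.algebraMap_ne_zero (Polynomial.X_add_C_ne_zero ζ)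
  have hb : b ≠ 0 := by
    rw [hb_def, halg]
    exact RatFunc.algebraMap_ne_zero (Polynomial.X_add_C_ne_zero (ζ ^ 2))
  have hX : (RatFunc.X : RatFunc F) ≠ 0 := by
    rw [← RatFunc.algebraMap_X (K := F)]
    exact RatFunc.algebraMap_ne_zero Polynomial.X_ne_zero
  have hX1 : (RatFunc.X - 1 : RatFunc F) ≠ 0 := by
    have : (RatFunc.X - 1 : RatFunc F) =
        algebraMap (Polynomial F) (RatFunc F) (Polynomial.X - Polynomial.C 1) := by
      rw [map_sub, RatFunc.algebraMap_X, RatFunc.algebraMap_C, map_one]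
    rw [this]
    exact RatFunc.algebraMap_ne_zero (Polynomial.X_sub_C_ne_zero 1)
  have h3R : (3 : RatFunc F) ≠ 0 := by
    intro h
    apply h3F
    rw [show (3 : RatFunc F) = RatFunc.C (3 : F) from (map_ofNat RatFunc.C 3).symm,
      map_eq_zero] at h
    exact h
  have hζζ : (RatFunc.C ζ - RatFunc.C (ζ ^ 2) : RatFunc F) ≠ 0 := by
    rw [← map_sub, Ne, map_eq_zero, sub_eq_zero]
    exact hζne
  -- key product identity
  have hab : (RatFunc.X ^ 2 - RatFunc.X + 1 : RatFunc F) = a * b := by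
    rw [ha_def, hb_def]
    have h1 : RatFunc.C (ζ * ζ ^ 2) = (1 : RatFunc F) := by
      rw [show ζ * ζ ^ 2 = ζ ^ 3 by ring, hζ3, map_one]
    have h2 : RatFunc.C (ζ + ζ ^ 2) = (-1 : RatFunc F) := by
      rw [show ζ + ζ ^ 2 = ζ ^ 2 + ζ + 1 - 1 by ring, hζsum, map_sub, map_zero, map_one]
      ring
    calc (RatFunc.X ^ 2 - RatFunc.X + 1 : RatFunc F)
        = RatFunc.X ^ 2 + RatFunc.C (ζ + ζ ^ 2) * RatFunc.X + RatFunc.C (ζ * ζ ^ 2) := by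
          rw [h1, h2]; ring
      _ = (RatFunc.X + RatFunc.C ζ) * (RatFunc.X + RatFunc.C (ζ ^ 2)) := by
          rw [map_add, map_mul]; ring
  -- rewrite everything
  rw [hP i, hP j, hP (i - j), hQ (ℓ + j), hQ (ℓ + i), hQ ℓ, hab]
  rw [show 3 * (ℓ + j) - 1 = (3 * ℓ - 1) + 3 * j from by ring,
      show 3 * (ℓ + i) - 1 = ((3 * ℓ - 1) + 3 * (i - j)) + 3 * j from by ring,
      show 3 * i = 3 * (i - j) + 3 * j from by ring,
      mul_zpow]
  simp only [zpow_add₀ ha, zpow_add₀ hb]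
  ring
end

section
/- Let F be a field of characteristic different from 3 containing a primitive cube root of unity ζ₃. For a positive integer i, the rational function P_i(s) = ((s+ζ₃)^{3i} - (s+ζ₃²)^{3i})/(3(ζ₃-ζ₃²)s(s-1)) is a nonzero polynomial of degree at most 3i−3, and Q_i(s) = (((1-ζ₃)/3)(s+ζ₃)^{3i-1} + ((1-ζ₃²)/3)(s+ζ₃²)^{3i-1})/(s-1) is a nonzero polynomial of degree exactly 3i−2. -/
open Polynomial

theorem stmt7 (F : Type*) [Field F] (h3 : ringChar F ≠ 3)
    (ζ : F) (hζ : IsPrimitiveRoot ζ 3) (i : ℕ) (hi : 1 ≤ i) :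
    (∃ p : Polynomial F, p ≠ 0 ∧ p.degree ≤ (3 * i - 3 : ℕ) ∧
      algebraMap (Polynomial F) (RatFunc F) p =
        ((RatFunc.X + RatFunc.C ζ) ^ (3 * i) - (RatFunc.X + RatFunc.C (ζ ^ 2)) ^ (3 * i)) /
          (3 * (RatFunc.C ζ - RatFunc.C (ζ ^ 2)) * RatFunc.X * (RatFunc.X - 1))) ∧
    (∃ Q : Polynomial F, Q ≠ 0 ∧ Q.degree = (3 * i - 2 : ℕ) ∧
      algebraMap (Polynomial F) (RatFunc F) Q =
        (RatFunc.C ((1 - ζ) / 3) * (RatFunc.X + RatFunc.C ζ) ^ (3 * i - 1) +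
          RatFunc.C ((1 - ζ ^ 2) / 3) * (RatFunc.X + RatFunc.C (ζ ^ 2)) ^ (3 * i - 1)) /
          (RatFunc.X - 1)) := by
  obtain ⟨j, rfl⟩ : ∃ j, i = j + 1 := ⟨i - 1, by omega⟩
  have hζ3 : ζ ^ 3 = 1 := hζ.pow_eq_one
  have hζ1 : ζ ≠ 1 := hζ.ne_one (by norm_num)
  have hζ0 : ζ ≠ 0 := by
    intro h; rw [h] at hζ3; simp at hζ3
  have h3F : (3 : F) ≠ 0 := by
    intro h
    have hd : ringChar F ∣ 3 := (ringChar.spec F 3).mp (by exact_mod_cast h)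
    rcases (Nat.prime_three).eq_one_or_self_of_dvd _ hd with h1 | h1
    · exact CharP.ringChar_ne_one h1
    · exact h3 h1
  have hsum : ζ ^ 2 + ζ + 1 = 0 := by
    have hfact : (ζ - 1) * (ζ ^ 2 + ζ + 1) = 0 := by linear_combination hζ3
    exact (mul_eq_zero.mp hfact).resolve_left (sub_ne_zero.mpr hζ1)
  have hne : ζ - ζ ^ 2 ≠ 0 := by
    have h2 : ζ * (1 - ζ) ≠ 0 := mul_ne_zero hζ0 (sub_ne_zero.mpr (Ne.symm hζ1))
    intro h
    exact h2 (by linear_combination h)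
  have hz2 : 1 + ζ = -ζ ^ 2 := by linear_combination hsum
  have hz1 : 1 + ζ ^ 2 = -ζ := by linear_combination hsum
  have hc2pow : (-ζ ^ 2) ^ 3 = -1 := by linear_combination (-(ζ ^ 3) - 1) * hζ3
  have hc1pow : (-ζ) ^ 3 = -1 := by linear_combination -hζ3
  have hp1 : ∀ k : ℕ, ζ ^ (3 * k) = 1 := fun k => by rw [pow_mul, hζ3, one_pow]
  constructor
  · -- Part 1
    set N : ℕ := 3 * (j + 1) with hN
    set A : F[X] := (X + C ζ) ^ N - (X + C (ζ ^ 2)) ^ N with hA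
    have hfm : ((X + C ζ : F[X]) ^ N).Monic := (monic_X_add_C ζ).pow _
    have hgm : ((X + C (ζ ^ 2) : F[X]) ^ N).Monic := (monic_X_add_C _).pow _
    have hfnd : ((X + C ζ : F[X]) ^ N).natDegree = N := by
      simp [natDegree_pow, natDegree_X_add_C]
    have hgnd : ((X + C (ζ ^ 2) : F[X]) ^ N).natDegree = N := by
      rw [natDegree_pow, natDegree_X_add_C, mul_one]
    have hAlt : A.degree < (N : WithBot ℕ) := by
      have h := degree_sub_lt (p := (X + C ζ : F[X]) ^ N) (q := (X + C (ζ ^ 2)) ^ N)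
        (by rw [degree_eq_natDegree hfm.ne_zero, degree_eq_natDegree hgm.ne_zero, hfnd, hgnd])
        hfm.ne_zero (by rw [hfm.leadingCoeff, hgm.leadingCoeff])
      rwa [degree_eq_natDegree hfm.ne_zero, hfnd] at h
    have hAne : A ≠ 0 := by
      intro h
      have hev : A.eval (-ζ) = 0 := by rw [h]; simp
      rw [hA] at hev
      simp only [eval_sub, eval_pow, eval_add, eval_X, eval_C, neg_add_cancel, zero_pow
        (by positivity : N ≠ 0), zero_sub, neg_eq_zero] at hev
      exact pow_ne_zero N (by intro h'; exact hne (by linear_combination -h')) hev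
    have e1 : ζ ^ N = 1 := hp1 _
    have e2 : (ζ ^ 2) ^ N = 1 := by
      rw [← pow_mul, show 2 * N = 3 * (2 * (j + 1)) by rw [hN]; ring]
      exact hp1 _
    have hroot0 : A.IsRoot 0 := by
      simp only [IsRoot.def, hA, eval_sub, eval_pow, eval_add, eval_X, eval_C, zero_add, e1, e2,
        sub_self]
    have e3 : (-ζ ^ 2) ^ N = (-1 : F) ^ (j + 1) := by rw [hN, pow_mul, hc2pow]
    have e4 : (-ζ) ^ N = (-1 : F) ^ (j + 1) := by rw [hN, pow_mul, hc1pow]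
    have hroot1 : A.IsRoot 1 := by
      simp only [IsRoot.def, hA, eval_sub, eval_pow, eval_add, eval_X, eval_C]
      rw [hz2, hz1, e3, e4, sub_self]
    have hXdvd : (X : F[X]) ∣ A := by
      have := dvd_iff_isRoot.mpr hroot0
      simpa using this
    have hX1dvd : (X - C 1 : F[X]) ∣ A := dvd_iff_isRoot.mpr hroot1
    have hcop : IsCoprime (X : F[X]) (X - C 1) := by
      have := isCoprime_X_sub_C_of_isUnit_sub (R := F) (a := 0) (b := 1) (by simp)
      simpa using this
    obtain ⟨p₀, hp₀⟩ := hcop.mul_dvd hXdvd hX1dvd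
    have hp₀ne : p₀ ≠ 0 := by
      intro h; rw [h, mul_zero] at hp₀; exact hAne hp₀
    have hdegA : A.degree = ((2 + p₀.natDegree : ℕ) : WithBot ℕ) := by
      rw [hp₀, degree_mul, degree_mul, degree_X, degree_X_sub_C,
        degree_eq_natDegree hp₀ne]
      push_cast
      ring
    have hnd : 2 + p₀.natDegree < N := by
      have := hdegA ▸ hAlt
      exact_mod_cast this
    set c : F := 3 * (ζ - ζ ^ 2) with hcdef
    have hc0 : c ≠ 0 := mul_ne_zero h3F hne
    refine ⟨C c⁻¹ * p₀, mul_ne_zero (by simpa using inv_ne_zero hc0) hp₀ne, ?_, ?_⟩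
    · rw [degree_mul, degree_C (inv_ne_zero hc0), zero_add, degree_eq_natDegree hp₀ne]
      exact_mod_cast (by omega : p₀.natDegree ≤ 3 * (j + 1) - 3)
    · have hCC : (C c⁻¹ * C c : F[X]) = 1 := by rw [← C_mul, inv_mul_cancel₀ hc0, C_1]
      have hpoly : (C c⁻¹ * p₀) * (C c * (X * (X - C 1))) = A := by
        rw [hp₀]
        linear_combination (p₀ * (X * (X - C 1) : F[X])) * hCC
      have hden_eq : (3 * (RatFunc.C ζ - RatFunc.C (ζ ^ 2)) * RatFunc.X * (RatFunc.X - 1)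
          : RatFunc F) = algebraMap F[X] (RatFunc F) (C c * (X * (X - C 1))) := by
        simp only [map_mul, map_sub, map_one, RatFunc.algebraMap_C, RatFunc.algebraMap_X, hcdef,
          map_ofNat]
        ring
      have hden_ne : (3 * (RatFunc.C ζ - RatFunc.C (ζ ^ 2)) * RatFunc.X * (RatFunc.X - 1)
          : RatFunc F) ≠ 0 := by
        rw [hden_eq]
        exact RatFunc.algebraMap_ne_zero (mul_ne_zero (by simpa using hc0)
          (mul_ne_zero X_ne_zero (X_sub_C_ne_zero 1)))
      rw [eq_div_iff hden_ne, hden_eq, ← map_mul, hpoly, hA]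
      simp [map_sub, map_pow, map_add, RatFunc.algebraMap_X, RatFunc.algebraMap_C]
  · -- Part 2
    set a : F := (1 - ζ) / 3 with hadef
    set b : F := (1 - ζ ^ 2) / 3 with hbdef
    have hab : a + b = 1 := by
      rw [hadef, hbdef]
      field_simp
      linear_combination -hsum
    set m : ℕ := 3 * j + 2 with hm
    set B : F[X] := C a * (X + C ζ) ^ m + C b * (X + C (ζ ^ 2)) ^ m with hB
    have hfm : ((X + C ζ : F[X]) ^ m).Monic := (monic_X_add_C ζ).pow _
    have hgm : ((X + C (ζ ^ 2) : F[X]) ^ m).Monic := (monic_X_add_C _).pow _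
    have hfnd : ((X + C ζ : F[X]) ^ m).natDegree = m := by
      simp [natDegree_pow, natDegree_X_add_C]
    have hgnd : ((X + C (ζ ^ 2) : F[X]) ^ m).natDegree = m := by
      rw [natDegree_pow, natDegree_X_add_C, mul_one]
    have hcf : ((X + C ζ : F[X]) ^ m).coeff m = 1 := by
      have := hfm.coeff_natDegree
      rwa [hfnd] at this
    have hcg : ((X + C (ζ ^ 2) : F[X]) ^ m).coeff m = 1 := by
      have := hgm.coeff_natDegree
      rwa [hgnd] at this
    have hBc : B.coeff m = 1 := by
      rw [hB, coeff_add, coeff_C_mul, coeff_C_mul, hcf, hcg, mul_one, mul_one, hab]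
    have hBdeg_le : B.degree ≤ (m : WithBot ℕ) := by
      refine (degree_add_le _ _).trans ?_
      have h1 : ((X + C ζ : F[X]) ^ m).degree = (m : WithBot ℕ) := by
        rw [degree_eq_natDegree hfm.ne_zero, hfnd]
      have h2 : ((X + C (ζ ^ 2) : F[X]) ^ m).degree = (m : WithBot ℕ) := by
        rw [degree_eq_natDegree hgm.ne_zero, hgnd]
      have hb1 : (C a * (X + C ζ) ^ m).degree ≤ (m : WithBot ℕ) := by
        refine (degree_mul_le _ _).trans ?_
        calc (C a).degree + ((X + C ζ : F[X]) ^ m).degree ≤ 0 + (m : WithBot ℕ) :=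
              add_le_add degree_C_le (le_of_eq h1)
          _ = (m : WithBot ℕ) := by simp
      have hb2 : (C b * (X + C (ζ ^ 2)) ^ m).degree ≤ (m : WithBot ℕ) := by
        refine (degree_mul_le _ _).trans ?_
        calc (C b).degree + ((X + C (ζ ^ 2) : F[X]) ^ m).degree ≤ 0 + (m : WithBot ℕ) :=
              add_le_add degree_C_le (le_of_eq h2)
          _ = (m : WithBot ℕ) := by simp
      exact max_le hb1 hb2
    have hBdeg : B.degree = (m : WithBot ℕ) :=
      degree_eq_of_le_of_coeff_ne_zero hBdeg_le (hBc ▸ one_ne_zero)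
    have hBne : B ≠ 0 := by
      intro h; rw [h, degree_zero] at hBdeg; exact (by simp : (⊥ : WithBot ℕ) ≠ (m : WithBot ℕ)) hBdeg
    have keyz : (1 - ζ) * ζ ^ 4 + (1 - ζ ^ 2) * ζ ^ 2 = 0 := by
      linear_combination (-(ζ ^ 2)) * hζ3
    have e5 : (-ζ ^ 2) ^ m = (-1 : F) ^ j * ζ ^ 4 := by
      rw [hm, pow_add, pow_mul, hc2pow]; ring
    have e6 : (-ζ) ^ m = (-1 : F) ^ j * ζ ^ 2 := by
      rw [hm, pow_add, pow_mul, hc1pow]; ring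
    have hrootB : B.IsRoot 1 := by
      simp only [IsRoot.def, hB, eval_add, eval_mul, eval_pow, eval_X, eval_C]
      rw [hz2, hz1, e5, e6, hadef, hbdef]
      linear_combination ((-1 : F) ^ j / 3) * keyz
    obtain ⟨Q, hQ⟩ := dvd_iff_isRoot.mpr hrootB
    have hQne : Q ≠ 0 := by
      intro h; rw [h, mul_zero] at hQ; exact hBne hQ
    have hQnd : Q.natDegree = 3 * j + 1 := by
      have h := hBdeg
      rw [hQ, degree_mul, degree_X_sub_C, degree_eq_natDegree hQne] at h
      have h' : 1 + Q.natDegree = m := by exact_mod_cast h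
      omega
    refine ⟨Q, hQne, ?_, ?_⟩
    · rw [show (3 * (j + 1) - 2 : ℕ) = 3 * j + 1 by omega, degree_eq_natDegree hQne, hQnd]
    · rw [show 3 * (j + 1) - 1 = m by omega]
      have hden2eq : (RatFunc.X - 1 : RatFunc F) = algebraMap F[X] (RatFunc F) (X - C 1) := by
        simp [map_sub, RatFunc.algebraMap_X, RatFunc.algebraMap_C]
      have hden2 : (RatFunc.X - 1 : RatFunc F) ≠ 0 := by
        rw [hden2eq]
        exact RatFunc.algebraMap_ne_zero (X_sub_C_ne_zero 1)
      rw [eq_div_iff hden2, hden2eq, ← map_mul,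
        show Q * (X - C 1) = B by rw [hQ]; ring, hB]
      simp [map_add, map_mul, map_pow, RatFunc.algebraMap_X, RatFunc.algebraMap_C]
end

section
/- Let F be a field of characteristic ≠ 3 containing a primitive cube root of unity ζ₃, and let i be a positive integer. Then the polynomials P_i(s) = ((s+ζ₃)^{3i} - (s+ζ₃²)^{3i})/(3(ζ₃-ζ₃²)s(s-1)) and Q_i(s) = (((1-ζ₃)/3)(s+ζ₃)^{3i-1} + ((1-ζ₃²)/3)(s+ζ₃²)^{3i-1})/(s-1) have no common roots in any algebraically closed extension of F. -/
open Polynomial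

theorem stmt9 (F : Type*) [Field F] (h3 : ringChar F ≠ 3)
    (ζ : F) (hζ : IsPrimitiveRoot ζ 3) (i : ℕ) (hi : 1 ≤ i)
    (p Q : Polynomial F)
    (hp : algebraMap (Polynomial F) (RatFunc F) p =
      ((RatFunc.X + RatFunc.C ζ) ^ (3 * i) - (RatFunc.X + RatFunc.C (ζ ^ 2)) ^ (3 * i)) /
        (3 * (RatFunc.C ζ - RatFunc.C (ζ ^ 2)) * RatFunc.X * (RatFunc.X - 1)))
    (hQ : algebraMap (Polynomial F) (RatFunc F) Q =
      (RatFunc.C ((1 - ζ) / 3) * (RatFunc.X + RatFunc.C ζ) ^ (3 * i - 1) +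
        RatFunc.C ((1 - ζ ^ 2) / 3) * (RatFunc.X + RatFunc.C (ζ ^ 2)) ^ (3 * i - 1)) /
        (RatFunc.X - 1))
    (E : Type*) [Field E] [IsAlgClosed E] [Algebra F E] (x : E) :
    ¬ (Polynomial.aeval x p = 0 ∧ Polynomial.aeval x Q = 0) := by
  rintro ⟨hPx, hQx⟩
  -- basic facts in F
  have hζ3 : ζ ^ 3 = 1 := hζ.pow_eq_one
  have hζ1 : ζ ≠ 1 := hζ.ne_one (by norm_num)
  have h3F : (3 : F) ≠ 0 := by
    intro h
    have hdvd : ringChar F ∣ 3 := ringChar.dvd (by exact_mod_cast h)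
    rcases (Nat.prime_three).eq_one_or_self_of_dvd _ hdvd with h1 | h1
    · have hc : CharP F 1 := ringChar.eq_iff.mp h1
      have : ((1:ℕ):F) = 0 := CharP.cast_eq_zero F 1
      rw [Nat.cast_one] at this
      exact one_ne_zero this
    · exact h3 h1
  have hζ0 : ζ ≠ 0 := hζ.ne_zero (by norm_num)
  have hsum : 1 + ζ + ζ ^ 2 = 0 := by
    have hfac : (ζ - 1) * (ζ ^ 2 + ζ + 1) = 0 := by linear_combination hζ3
    rcases mul_eq_zero.mp hfac with h | h
    · exact absurd (sub_eq_zero.mp h) hζ1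
    · linear_combination h
  have hne : ζ - ζ ^ 2 ≠ 0 := by
    intro h
    have : ζ * (1 - ζ) = 0 := by linear_combination h
    rcases mul_eq_zero.mp this with h' | h'
    · exact hζ0 h'
    · exact hζ1 (by linear_combination -h')
  -- polynomial identities in F[X]
  have hinj := RatFunc.algebraMap_injective F
  have hDmap : algebraMap F[X] (RatFunc F) (3 * (C ζ - C (ζ^2)) * X * (X - 1)) =
      3 * (RatFunc.C ζ - RatFunc.C (ζ ^ 2)) * RatFunc.X * (RatFunc.X - 1) := by
    simp [map_mul, map_sub, map_one, map_ofNat, RatFunc.algebraMap_C, RatFunc.algebraMap_X]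
  have hDne : (3 * (C ζ - C (ζ^2)) * X * (X - 1) : F[X]) ≠ 0 := by
    apply mul_ne_zero
    apply mul_ne_zero
    apply mul_ne_zero
    · intro h; apply h3F; simpa using congrArg (Polynomial.eval 0) h
    · rw [← C_sub]; exact C_ne_zero.mpr hne
    · exact X_ne_zero
    · exact sub_ne_zero.mpr (by simpa using X_ne_C (1:F))
  have hpD : p * (3 * (C ζ - C (ζ^2)) * X * (X - 1)) =
      (X + C ζ) ^ (3*i) - (X + C (ζ^2)) ^ (3*i) := by
    apply hinj
    rw [map_mul, hDmap, hp, div_mul_cancel₀]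
    · simp [map_sub, map_pow, map_add, RatFunc.algebraMap_C, RatFunc.algebraMap_X]
    · rw [← hDmap]; exact (map_ne_zero_iff _ hinj).mpr hDne
  have hQD : Q * (X - 1) =
      C ((1 - ζ)/3) * (X + C ζ) ^ (3*i - 1) + C ((1 - ζ^2)/3) * (X + C (ζ^2)) ^ (3*i - 1) := by
    apply hinj
    have hX1 : algebraMap F[X] (RatFunc F) (X - 1) = RatFunc.X - 1 := by
      simp [map_sub, map_one, RatFunc.algebraMap_X]
    rw [map_mul, hX1, hQ, div_mul_cancel₀]
    · simp [map_add, map_mul, map_pow, RatFunc.algebraMap_C, RatFunc.algebraMap_X]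
    · rw [← hX1]
      exact (map_ne_zero_iff _ hinj).mpr (sub_ne_zero.mpr (by simpa using X_ne_C (1:F)))
  -- transfer to E
  have hinjE : Function.Injective (algebraMap F E) := (algebraMap F E).injective
  set ω : E := algebraMap F E ζ with hωdef
  have hω3 : ω ^ 3 = 1 := by rw [hωdef, ← map_pow, hζ3, map_one]
  have hsumE : 1 + ω + ω ^ 2 = 0 := by
    have := congrArg (algebraMap F E) hsum
    simpa [map_add, map_pow, map_one, map_zero] using this
  have h3E : (3 : E) ≠ 0 := by
    intro h
    apply h3F
    apply hinjE
    rw [map_ofNat, map_zero, h]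
  have hneE : ω - ω ^ 2 ≠ 0 := by
    intro h
    apply hne
    apply hinjE
    rw [map_sub, map_pow, map_zero, ← hωdef, h]
  have e1 : (x + ω) ^ (3*i) = (x + ω ^ 2) ^ (3*i) := by
    have h := congrArg (Polynomial.aeval x) hpD
    simp only [map_mul, map_sub, map_add, map_pow, map_ofNat, map_one, Polynomial.aeval_X,
      Polynomial.aeval_C, hPx, zero_mul, ← hωdef] at h
    linear_combination -h
  have e2 : (1 - ω)/3 * (x + ω) ^ (3*i-1) + (1 - ω ^ 2)/3 * (x + ω ^ 2) ^ (3*i-1) = 0 := by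
    have h := congrArg (Polynomial.aeval x) hQD
    simp only [map_mul, map_sub, map_add, map_pow, map_ofNat, map_one, map_div₀,
      Polynomial.aeval_X, Polynomial.aeval_C, hQx, zero_mul, ← hωdef] at h
    linear_combination -h
  -- derive x = 1
  have hb0 : x + ω ^ 2 ≠ 0 := by
    intro hb
    have ha : (x + ω) ^ (3*i) = 0 := by rw [e1, hb, zero_pow (by omega)]
    have ha' : x + ω = 0 := pow_eq_zero_iff (by omega) |>.mp ha
    exact hneE (by linear_combination ha' - hb)
  have e2' : (1 - ω) * (x + ω) ^ (3*i-1) + (1 - ω ^ 2) * (x + ω ^ 2) ^ (3*i-1) = 0 := by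
    have h := e2
    field_simp at h
    linear_combination h
  have hsucc : 3*i = (3*i - 1) + 1 := by omega
  have hab' : (x + ω) ^ (3*i-1) * (x + ω) = (x + ω ^ 2) ^ (3*i-1) * (x + ω ^ 2) := by
    rw [← pow_succ, ← pow_succ, ← hsucc]; exact e1
  have hkey : ((1 - ω) * (x + ω ^ 2) + (1 - ω ^ 2) * (x + ω)) * (x + ω ^ 2) ^ (3*i-1) = 0 := by
    linear_combination (x + ω) * e2' - (1 - ω) * hab'
  have hlin : (1 - ω) * (x + ω ^ 2) + (1 - ω ^ 2) * (x + ω) = 0 :=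
    (mul_eq_zero.mp hkey).resolve_right (pow_ne_zero _ hb0)
  have hx3 : (3 : E) * (x - 1) = 0 := by linear_combination hlin + (x - 1) * hsumE + 2 * hω3
  have hx1 : x = 1 := by
    rcases mul_eq_zero.mp hx3 with h | h
    · exact absurd h h3E
    · exact sub_eq_zero.mp h
  subst hx1
  have hP1 : Polynomial.eval 1 p = 0 := hinjE (by
    rw [map_zero, ← Polynomial.eval₂_at_one (algebraMap F E), ← Polynomial.aeval_def]
    exact hPx)
  have hQ1 : Polynomial.eval 1 Q = 0 := hinjE (by
    rw [map_zero, ← Polynomial.eval₂_at_one (algebraMap F E), ← Polynomial.aeval_def]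
    exact hQx)
  -- power computations in F
  have h1ζ : (1 + ζ : F) = -ζ^2 := by linear_combination hsum
  have h1ζ2 : (1 + ζ^2 : F) = -ζ := by linear_combination hsum
  have hc3 : (-ζ^2 : F)^3 = -1 := by linear_combination (-(ζ^3) - 1) * hζ3
  have hc2 : (-ζ^2 : F)^2 = ζ := by linear_combination ζ * hζ3
  have hd3 : (-ζ : F)^3 = -1 := by linear_combination -hζ3
  have hd2 : (-ζ : F)^2 = ζ^2 := by ring
  have hpow1 : (1 + ζ : F)^(3*i-1) = (-1)^(i-1) * ζ := by
    rw [h1ζ, show 3*i-1 = 3*(i-1)+2 by omega, pow_add, pow_mul, hc3, hc2]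
  have hpow2 : (1 + ζ^2 : F)^(3*i-1) = (-1)^(i-1) * ζ^2 := by
    rw [h1ζ2, show 3*i-1 = 3*(i-1)+2 by omega, pow_add, pow_mul, hd3, hd2]
  have hpow3 : (1 + ζ : F)^(3*i-1-1) = (-1)^(i-1) * -ζ^2 := by
    rw [h1ζ, show 3*i-1-1 = 3*(i-1)+1 by omega, pow_add, pow_mul, hc3, pow_one]
  have hpow4 : (1 + ζ^2 : F)^(3*i-1-1) = (-1)^(i-1) * -ζ := by
    rw [h1ζ2, show 3*i-1-1 = 3*(i-1)+1 by omega, pow_add, pow_mul, hd3, pow_one]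
  -- derivative of the P identity at 1
  have hdP := congrArg (fun q : F[X] => Polynomial.eval 1 (Polynomial.derivative q)) hpD
  simp only [Polynomial.derivative_mul, Polynomial.derivative_pow, Polynomial.derivative_sub,
    Polynomial.derivative_add, Polynomial.derivative_X, Polynomial.derivative_C,
    Polynomial.derivative_one, Polynomial.derivative_ofNat, Polynomial.eval_mul,
    Polynomial.eval_add, Polynomial.eval_sub, Polynomial.eval_pow, Polynomial.eval_X,
    Polynomial.eval_C, Polynomial.eval_one, Polynomial.eval_ofNat, Polynomial.eval_natCast,
    Polynomial.eval_zero, add_zero, zero_add, mul_zero, zero_mul, mul_one, sub_self, sub_zero,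
    hP1, hpow1, hpow2] at hdP
  have hdQ := congrArg (fun q : F[X] => Polynomial.eval 1 (Polynomial.derivative q)) hQD
  simp only [Polynomial.derivative_mul, Polynomial.derivative_pow, Polynomial.derivative_sub,
    Polynomial.derivative_add, Polynomial.derivative_X, Polynomial.derivative_C,
    Polynomial.derivative_one, Polynomial.derivative_ofNat, Polynomial.eval_mul,
    Polynomial.eval_add, Polynomial.eval_sub, Polynomial.eval_pow, Polynomial.eval_X,
    Polynomial.eval_C, Polynomial.eval_one, Polynomial.eval_ofNat, Polynomial.eval_natCast,
    Polynomial.eval_zero, add_zero, zero_add, mul_zero, zero_mul, mul_one, sub_self, sub_zero,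
    hQ1, hpow3, hpow4] at hdQ
  field_simp at hdQ
  have h0P : ((3*i : ℕ) : F) * ((-1)^(i-1) * (ζ - ζ^2)) = 0 := by
    linear_combination -hdP
  have h9ne : (9 : F) ≠ 0 := by
    intro h
    exact h3F (mul_self_eq_zero.mp (by linear_combination h))
  have h9 : (9 : F) * ((3*(i:F) - 1) * ((-1 : F)^(i-1))) = 0 := by
    have hc : ((3*i-1 : ℕ) : F) = 3*(i:F) - 1 := by
      rw [Nat.cast_sub (by omega)]; push_cast; ring
    linear_combination (-3) * hdQ
      + (3*((3*i-1 : ℕ) : F)*(-1:F)^(i-1)) * hsum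
      - (6*((3*i-1 : ℕ) : F)*(-1:F)^(i-1)) * hζ3 - (9*(-1:F)^(i-1)) * hc
  have h0Q : (3*(i:F) - 1) * ((-1 : F)^(i-1)) = 0 :=
    (mul_eq_zero.mp h9).resolve_left h9ne
  have hm1 : ((-1 : F))^(i-1) ≠ 0 := pow_ne_zero _ (neg_ne_zero.mpr one_ne_zero)
  have hiF : ((3*i : ℕ) : F) = 0 :=
    (mul_eq_zero.mp h0P).resolve_right (mul_ne_zero hm1 hne)
  have hQF : (3*(i:F) - 1) = 0 :=
    (mul_eq_zero.mp h0Q).resolve_right hm1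
  push_cast at hiF
  exact one_ne_zero (by linear_combination hiF - hQF)
end

section
/- Let q be a prime power with q ≡ 1 (mod 3), and let α ∈ 𝔽_{q²} satisfy α ∉ {0,1} and α^q − α^{q−1} = 1 and α² − α + 1 ≠ 0. Let ζ₃ ∈ 𝔽_{q²} be a primitive cube root of unity. Then ((α+ζ₃)/(α+ζ₃²))^{q+1} = ζ₃. -/
theorem stmt10 (q : ℕ) (hq : ∃ p n : ℕ, Nat.Prime p ∧ 0 < n ∧ q = p ^ n)
    (hmod : q % 3 = 1)
    (F : Type*) [Field F] [Fintype F] (hcard : Fintype.card F = q ^ 2)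
    (ζ α : F) (hζ : IsPrimitiveRoot ζ 3)
    (h0 : α ≠ 0) (h1 : α ≠ 1) (h2 : α ^ 2 - α + 1 ≠ 0)
    (hα : α ^ q - α ^ (q - 1) = 1) :
    ((α + ζ) / (α + ζ ^ 2)) ^ (q + 1) = ζ := by
  obtain ⟨p, n, hp, hn, rfl⟩ := hq
  haveI : Fact p.Prime := ⟨hp⟩
  -- characteristic of F is p
  haveI hcp : CharP F p := by
    haveI : CharP F (ringChar F) := ringChar.charP F
    obtain ⟨m, hrp, hcard'⟩ := FiniteField.card F (ringChar F)
    have hdvd : ringChar F ∣ p ^ (n * 2) := by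
      rw [← pow_mul] at hcard
      rw [← hcard, hcard']
      exact dvd_pow_self _ m.pos.ne'
    have hre : ringChar F = p :=
      (Nat.prime_dvd_prime_iff_eq hrp hp).mp (hrp.dvd_of_dvd_pow hdvd)
    rwa [← hre]
  have hq1 : 1 ≤ p ^ n := Nat.one_le_pow _ _ hp.pos
  have hfrob : ∀ a b : F, (a + b) ^ p ^ n = a ^ p ^ n + b ^ p ^ n := fun a b =>
    add_pow_char_pow a b p n
  -- facts about ζ
  have h3 : ζ ^ 3 = 1 := hζ.pow_eq_one
  have hz1 : ζ ≠ 1 := hζ.ne_one (by norm_num)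
  have hzq : ζ ^ 2 + ζ + 1 = 0 := by
    have hmul : (ζ - 1) * (ζ ^ 2 + ζ + 1) = 0 := by linear_combination h3
    rcases mul_eq_zero.mp hmul with h | h
    · exact absurd (sub_eq_zero.mp h) hz1
    · exact h
  have hz0 : ζ ≠ 0 := hζ.ne_zero (by norm_num)
  have hzetaq : ζ ^ p ^ n = ζ := by
    conv_lhs => rw [← Nat.div_add_mod (p ^ n) 3, hmod, pow_add, pow_mul, h3, one_pow,
      one_mul, pow_one]
  -- α facts
  have hA1 : α - 1 ≠ 0 := sub_ne_zero.mpr h1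
  have hpowsucc : α ^ p ^ n = α ^ (p ^ n - 1) * α := by
    rw [← pow_succ]
    congr 1
    omega
  have hA : α ^ p ^ n * (α - 1) = α := by
    have h' : α ^ (p ^ n - 1) * (α - 1) = 1 := by
      linear_combination hα - hpowsucc
    calc α ^ p ^ n * (α - 1) = α * (α ^ (p ^ n - 1) * (α - 1)) := by
          rw [hpowsucc]; ring
      _ = α := by rw [h']; ring
  have hNid : (α ^ p ^ n + ζ) * (α + ζ) * (α - 1) = (1 + ζ) * (α ^ 2 - α + 1) := by
    linear_combination (α + ζ) * hA + (α - 1) * hzq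
  have hDid : (α ^ p ^ n + ζ ^ 2) * (α + ζ ^ 2) * (α - 1) = -ζ * (α ^ 2 - α + 1) := by
    linear_combination (α + ζ ^ 2) * hA + (α ^ 2 + (α - 1) * ζ * (ζ - 1)) * hzq
  have hD : (α ^ p ^ n + ζ ^ 2) * (α + ζ ^ 2) ≠ 0 := by
    intro h
    apply h2
    have h' := hDid
    rw [h, zero_mul] at h'
    rcases mul_eq_zero.mp h'.symm with h'' | h''
    · exact absurd h'' (by simpa using hz0)
    · exact h''
  have hNq : (α + ζ) ^ p ^ n = α ^ p ^ n + ζ := by rw [hfrob, hzetaq]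
  have hDq : (α + ζ ^ 2) ^ p ^ n = α ^ p ^ n + ζ ^ 2 := by
    rw [hfrob]
    congr 1
    rw [← pow_mul, mul_comm, pow_mul, hzetaq]
  rw [pow_succ, div_pow, div_mul_div_comm, hNq, hDq, div_eq_iff hD]
  refine mul_right_cancel₀ hA1 ?_
  linear_combination hNid - ζ * hDid + (α ^ 2 - α + 1) * hzq
end

section
/- Let q be a prime power with q ≡ 1 (mod 3) and let α be an element of a field of characteristic p = char 𝔽_q, with α ∉ {0,1}. If α^q = α/(α−1), then ((α+ζ₃)/(α+ζ₃²))^q = ζ₃·(α+ζ₃²)/(α+ζ₃), where ζ₃ is a primitive cube root of unity with ζ₃^q = ζ₃ and α²−α+1 ≠ 0. -/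
theorem stmt11 (p n q : ℕ) (hp : Nat.Prime p) (hn : 0 < n) (hq : q = p ^ n)
    (hmod : q % 3 = 1)
    (K : Type*) [Field K] [CharP K p]
    (ζ α : K) (hζ : IsPrimitiveRoot ζ 3) (hζq : ζ ^ q = ζ)
    (h0 : α ≠ 0) (h1 : α ≠ 1) (h2 : α ^ 2 - α + 1 ≠ 0)
    (hα : α ^ q = α / (α - 1)) :
    ((α + ζ) / (α + ζ ^ 2)) ^ q = ζ * (α + ζ ^ 2) / (α + ζ) := by
  haveI := Fact.mk hp
  have hζ3 : ζ ^ 3 = 1 := hζ.pow_eq_one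
  have hζ1 : ζ ≠ 1 := hζ.ne_one (by norm_num)
  have hζ0 : ζ ≠ 0 := hζ.ne_zero (by norm_num)
  have hsum : ζ ^ 2 + ζ + 1 = 0 := by
    have h : (ζ - 1) * (ζ ^ 2 + ζ + 1) = 0 := by linear_combination hζ3
    rcases mul_eq_zero.mp h with h' | h'
    · exact absurd (sub_eq_zero.mp h') hζ1
    · exact h'
  have hd : α - 1 ≠ 0 := sub_ne_zero.mpr h1
  have hA : α + ζ ≠ 0 := by
    intro h
    apply h2
    have hα' : α = -ζ := eq_neg_of_add_eq_zero_left h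
    rw [hα']
    linear_combination hsum
  have hB : α + ζ ^ 2 ≠ 0 := by
    intro h
    apply h2
    have hα' : α = -ζ ^ 2 := eq_neg_of_add_eq_zero_left h
    rw [hα']
    linear_combination hsum + ζ * hζ3
  have hB2 : α / (α - 1) + ζ ^ 2 ≠ 0 := by
    intro h
    have h' : α + ζ ^ 2 * (α - 1) = 0 := by
      field_simp at h
      linear_combination h
    have hz : (-ζ) * (α + ζ) = 0 := by linear_combination h' - α * hsum
    rcases mul_eq_zero.mp hz with h'' | h''
    · exact hζ0 (neg_eq_zero.mp h'')
    · exact hA h''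
  subst hq
  rw [div_pow, add_pow_char_pow, add_pow_char_pow, hα, ← pow_mul, mul_comm 2 (p ^ n),
    pow_mul, hζq]
  rw [div_eq_div_iff hB2 hA]
  field_simp
  linear_combination ((1 - α) * ζ ^ 3 + (α - 1) * ζ ^ 2 - α ^ 2 * ζ + α ^ 2) * hsum
end

section
/- Let F be a field of characteristic ≠ 3 containing a primitive cube root of unity ζ₃. Define Q_i(s) = (((1-ζ₃)/3)(s+ζ₃)^{3i-1} + ((1-ζ₃²)/3)(s+ζ₃²)^{3i-1})/(s-1), P_i(s) = ((s+ζ₃)^{3i} - (s+ζ₃²)^{3i})/(3(ζ₃-ζ₃²)s(s-1)), and R_i(s) = (−1)^i·((2ζ₃+1)/3)·((s+ζ₃²)^{3i-2} − (s+ζ₃)^{3i-2}). Then for all integers i, j, k: Q_i(1−s)·Q_{j+k}(1−s) − Q_j(1−s)·Q_{i+k}(1−s) = 9·(−1)^{i+j+k}·(s−1)²·(s²−s+1)^{3j−1}·P_{i−j}(s)·P_k(s), as an identity of rational functions in F(s). -/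
set_option maxHeartbeats 1600000 in
theorem stmt16_aux {K : Type*} [Field K] (Z T a b Cb Cd xi xj xk yi yj yk wi wj wk : K)
    (hZ : Z ≠ 0) (hT : T ≠ 0) (ha : a ≠ 0) (hb : b ≠ 0) (hCd : Cd ≠ 0) (hCb : Cb ≠ 0)
    (h3 : (3 : K) ≠ 0) (hxj : xj ≠ 0) (hyj : yj ≠ 0) :
    wi * (-(Cb * Cd ^ 2)⁻¹ * (yi / b) + Cb * (xi / a)) / Z *
        (wj * wk * (-(Cb * Cd ^ 2)⁻¹ * (yj * yk / b) + Cb * (xj * xk / a)) / Z) -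
      wj * (-(Cb * Cd ^ 2)⁻¹ * (yj / b) + Cb * (xj / a)) / Z *
        (wi * wk * (-(Cb * Cd ^ 2)⁻¹ * (yi * yk / b) + Cb * (xi * xk / a)) / Z) =
    9 * (wi * wj * wk) * T ^ 2 * (xj * yj * (a * b)⁻¹) *
        ((xi / xj - yi / yj) / (3 * Cd * Z * T)) *
      ((xk - yk) / (3 * Cd * Z * T)) := by
  field_simp [hZ, hT, ha, hb, hCd, hCb, h3, hxj, hyj]
  have hD : Cb * Cd ^ 2 * b * a * Z * (Cb * Cd ^ 2 * b * a * Z) ≠ 0 := by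
    apply mul_ne_zero <;>
      exact mul_ne_zero (mul_ne_zero (mul_ne_zero (mul_ne_zero hCb (pow_ne_zero _ hCd)) hb) ha) hZ
  have h3CZT : 3 * Cd * Z * T ≠ 0 :=
    mul_ne_zero (mul_ne_zero (mul_ne_zero h3 hCd) hZ) hT
  have hD' : a * b * (xj * yj * (3 * Cd * Z * T)) * (3 * Cd * Z * T) ≠ 0 :=
    mul_ne_zero (mul_ne_zero (mul_ne_zero ha hb)
      (mul_ne_zero (mul_ne_zero hxj hyj) h3CZT)) h3CZT
  ring

theorem stmt16 (F : Type*) [Field F] (h3 : ringChar F ≠ 3)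
    (ζ : F) (hζ : IsPrimitiveRoot ζ 3)
    (P Qm : ℤ → RatFunc F)
    (hP : ∀ i : ℤ, P i =
      ((RatFunc.X + RatFunc.C ζ) ^ (3 * i) - (RatFunc.X + RatFunc.C (ζ ^ 2)) ^ (3 * i)) /
        (3 * (RatFunc.C ζ - RatFunc.C (ζ ^ 2)) * RatFunc.X * (RatFunc.X - 1)))
    (hQm : ∀ i : ℤ, Qm i =
      (RatFunc.C ((1 - ζ) / 3) * ((1 - RatFunc.X) + RatFunc.C ζ) ^ (3 * i - 1) +
        RatFunc.C ((1 - ζ ^ 2) / 3) * ((1 - RatFunc.X) + RatFunc.C (ζ ^ 2)) ^ (3 * i - 1)) /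
        ((1 - RatFunc.X) - 1))
    (i j k : ℤ) :
    Qm i * Qm (j + k) - Qm j * Qm (i + k) =
      9 * (-1 : RatFunc F) ^ (i + j + k) * (RatFunc.X - 1) ^ 2 *
        (RatFunc.X ^ 2 - RatFunc.X + 1) ^ (3 * j - 1) * P (i - j) * P k := by
  classical
  -- facts in F
  have hζ1 : ζ ≠ 1 := hζ.ne_one (by norm_num)
  have hc3 : ζ ^ 3 = 1 := hζ.pow_eq_one
  have hzs : ζ ^ 2 + ζ + 1 = 0 := by
    have h0 : (ζ - 1) * (ζ ^ 2 + ζ + 1) = 0 := by linear_combination hc3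
    rcases mul_eq_zero.mp h0 with h' | h'
    · exact absurd (sub_eq_zero.mp h') hζ1
    · exact h'
  have h3F : (3 : F) ≠ 0 := by
    intro h
    exact h3 (CharP.ringChar_of_prime_eq_zero Nat.prime_three (by exact_mod_cast h))
  have hz0 : ζ ≠ 0 := hζ.ne_zero (by norm_num)
  have hz2 : ζ ^ 2 ≠ 1 := fun h => hζ1 (by linear_combination hc3 - ζ * h)
  have hzz2 : ζ - ζ ^ 2 ≠ 0 := by
    intro h
    have h1 : ζ * (1 - ζ) = 0 := by linear_combination h
    rcases mul_eq_zero.mp h1 with h' | h'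
    · exact hz0 h'
    · exact hζ1 (by linear_combination -h')
  -- the key constant identity in F
  have hconstF : (1 - ζ) / 3 * ((1 - ζ ^ 2) / 3) * (ζ - ζ ^ 2) ^ 2 = -1 := by
    field_simp
    linear_combination (ζ ^ 4 - 3 * ζ ^ 3 + 2 * ζ ^ 2 + 3 * ζ - 6) * hc3 + 3 * hzs
  -- nonzero facts in RatFunc F
  have hCinj : Function.Injective (RatFunc.C : F →+* RatFunc F) := RingHom.injective _
  have hCne : ∀ c : F, c ≠ 0 → (RatFunc.C c : RatFunc F) ≠ 0 := by
    intro c hc h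
    exact hc (hCinj (by simpa using h))
  have hXne : (RatFunc.X : RatFunc F) ≠ 0 := RatFunc.X_ne_zero
  have hX1 : (RatFunc.X : RatFunc F) - 1 ≠ 0 := by
    have : (RatFunc.X : RatFunc F) - 1 =
        algebraMap (Polynomial F) (RatFunc F) (Polynomial.X - Polynomial.C 1) := by
      simp [RatFunc.algebraMap_X, RatFunc.algebraMap_C]
    rw [this]
    exact RatFunc.algebraMap_ne_zero (Polynomial.X_sub_C_ne_zero 1)
  have haP : ∀ c : F, (RatFunc.X : RatFunc F) + RatFunc.C c ≠ 0 := by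
    intro c
    have h5 : algebraMap (Polynomial F) (RatFunc F) (Polynomial.X - Polynomial.C (-c)) =
        RatFunc.X + RatFunc.C c := by
      simp [map_sub, map_neg, RatFunc.algebraMap_X, RatFunc.algebraMap_C, sub_neg_eq_add]
    rw [← h5]
    exact RatFunc.algebraMap_ne_zero (Polynomial.X_sub_C_ne_zero (-c))
  have ha : (RatFunc.X : RatFunc F) + RatFunc.C ζ ≠ 0 := haP ζ
  have hb : (RatFunc.X : RatFunc F) + RatFunc.C (ζ ^ 2) ≠ 0 := haP (ζ ^ 2)
  have h3K : (3 : RatFunc F) ≠ 0 := by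
    have h6 := hCne (3 : F) h3F
    rwa [map_ofNat] at h6
  have hm1 : (-1 : RatFunc F) ≠ 0 := by norm_num
  have hbz : RatFunc.C (ζ ^ 2) + RatFunc.C ζ = (-1 : RatFunc F) := by
    rw [← map_add]
    have : ζ ^ 2 + ζ = -1 := by linear_combination hzs
    rw [this]
    simp
  have hCd : RatFunc.C ζ - RatFunc.C (ζ ^ 2) ≠ 0 := by
    rw [← map_sub]
    exact hCne _ hzz2
  -- notation
  set a : RatFunc F := RatFunc.X + RatFunc.C ζ with ha_def
  set b : RatFunc F := RatFunc.X + RatFunc.C (ζ ^ 2) with hb_def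
  have ha3 : a ^ (3 : ℤ) ≠ 0 := zpow_ne_zero _ ha
  have hb3 : b ^ (3 : ℤ) ≠ 0 := zpow_ne_zero _ hb
  have hab : a * b = RatFunc.X ^ 2 - RatFunc.X + 1 := by
    have hprod : RatFunc.C ζ * RatFunc.C (ζ ^ 2) = 1 := by
      rw [← map_mul]
      have : ζ * ζ ^ 2 = 1 := by linear_combination hc3
      rw [this]; simp
    rw [ha_def, hb_def]
    linear_combination RatFunc.X * hbz + hprod
  -- generic negative power computation
  have key_neg : ∀ (c : RatFunc F), c ≠ 0 → ∀ n : ℤ,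
      (-c) ^ (3 * n - 1) = -((-1 : RatFunc F) ^ n * ((c ^ (3 : ℤ)) ^ n / c)) := by
    intro c hc n
    have h1 : (-c) = (-1) * c := by ring
    rw [h1, mul_zpow, zpow_sub₀ hm1, zpow_sub₀ hc, zpow_mul (-1 : RatFunc F) 3 n,
      zpow_mul c 3 n]
    have h2 : ((-1 : RatFunc F) ^ (3 : ℤ)) = -1 := by norm_num
    rw [h2]
    have h3' : ((-1 : RatFunc F) ^ (1 : ℤ)) = -1 := by norm_num
    have h4 : (c ^ (1 : ℤ)) = c := by norm_num
    rw [h3', h4]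
    set w := (-1 : RatFunc F) ^ n with hw
    set u := (c ^ (3 : ℤ)) ^ n with hu
    ring
  -- the Q formula
  have hQ : ∀ n : ℤ, Qm n = (-1 : RatFunc F) ^ n *
      (RatFunc.C ((1 - ζ) / 3) * ((b ^ (3 : ℤ)) ^ n / b) +
        RatFunc.C ((1 - ζ ^ 2) / 3) * ((a ^ (3 : ℤ)) ^ n / a)) / RatFunc.X := by
    intro n
    rw [hQm n]
    have e1 : (1 - RatFunc.X) + RatFunc.C ζ = -b := by
      rw [hb_def]; linear_combination hbz
    have e2 : (1 - RatFunc.X) + RatFunc.C (ζ ^ 2) = -a := by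
      rw [ha_def]; linear_combination hbz
    have e3 : (1 - RatFunc.X : RatFunc F) - 1 = -RatFunc.X := by ring
    rw [e1, e2, e3, key_neg b hb n, key_neg a ha n]
    set w := (-1 : RatFunc F) ^ n with hw
    set u := (b ^ (3 : ℤ)) ^ n with hu
    set v := (a ^ (3 : ℤ)) ^ n with hv
    set p := RatFunc.C ((1 - ζ) / 3) with hp
    set q := RatFunc.C ((1 - ζ ^ 2) / 3) with hq
    field_simp
    ring
  -- the P formula
  have hPx : ∀ n : ℤ, P n = ((a ^ (3 : ℤ)) ^ n - (b ^ (3 : ℤ)) ^ n) /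
      (3 * (RatFunc.C ζ - RatFunc.C (ζ ^ 2)) * RatFunc.X * (RatFunc.X - 1)) := by
    intro n
    rw [hP n, zpow_mul a 3 n, zpow_mul b 3 n]
  -- rewrite the power of X^2 - X + 1
  have habpow : (RatFunc.X ^ 2 - RatFunc.X + 1 : RatFunc F) ^ (3 * j - 1) =
      (a ^ (3 : ℤ)) ^ j * (b ^ (3 : ℤ)) ^ j * (a * b)⁻¹ := by
    rw [← hab, zpow_sub_one₀ (mul_ne_zero ha hb), zpow_mul (a * b) 3 j, mul_zpow, mul_zpow]
  -- the constant identity in RatFunc F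
  have hconst : RatFunc.C ((1 - ζ) / 3) * RatFunc.C ((1 - ζ ^ 2) / 3) *
      (RatFunc.C ζ - RatFunc.C (ζ ^ 2)) ^ 2 = -1 := by
    rw [← map_sub, ← map_pow, ← map_mul, ← map_mul, hconstF]
    simp
  -- assemble
  rw [hQ i, hQ (j + k), hQ j, hQ (i + k), hPx (i - j), hPx k, habpow]
  simp only [zpow_add₀ hm1, zpow_add₀ ha3, zpow_add₀ hb3, zpow_sub₀ ha3, zpow_sub₀ hb3]
  set Ca := RatFunc.C ((1 - ζ) / 3) with hCa_def
  set Cb := RatFunc.C ((1 - ζ ^ 2) / 3) with hCb_def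
  set Cd := RatFunc.C ζ - RatFunc.C (ζ ^ 2) with hCd_def
  have hCbne : Cb ≠ 0 := by
    intro h
    rw [h] at hconst
    simp at hconst
  have hne2 : Cb * Cd ^ 2 ≠ 0 := mul_ne_zero hCbne (pow_ne_zero _ hCd)
  have hCaval : Ca = -(Cb * Cd ^ 2)⁻¹ := by
    have h7 : Ca = -1 / (Cb * Cd ^ 2) := by
      rw [eq_div_iff hne2]
      linear_combination hconst
    rw [h7, neg_div, one_div]
  set xi := (a ^ (3 : ℤ)) ^ i with hxi_def
  set xj := (a ^ (3 : ℤ)) ^ j with hxj_def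
  set xk := (a ^ (3 : ℤ)) ^ k with hxk_def
  set yi := (b ^ (3 : ℤ)) ^ i with hyi_def
  set yj := (b ^ (3 : ℤ)) ^ j with hyj_def
  set yk := (b ^ (3 : ℤ)) ^ k with hyk_def
  set wi := (-1 : RatFunc F) ^ i with hwi_def
  set wj := (-1 : RatFunc F) ^ j with hwj_def
  set wk := (-1 : RatFunc F) ^ k with hwk_def
  have hxj0 : xj ≠ 0 := zpow_ne_zero _ ha3
  have hyj0 : yj ≠ 0 := zpow_ne_zero _ hb3
  have hxi0 : xi ≠ 0 := zpow_ne_zero _ ha3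
  have hyi0 : yi ≠ 0 := zpow_ne_zero _ hb3
  clear hQ hPx hQm hP key_neg habpow hconst
  clear_value xi xj xk yi yj yk wi wj wk Ca Cb Cd a b
  rw [hCaval]
  exact stmt16_aux RatFunc.X (RatFunc.X - 1) a b Cb Cd xi xj xk yi yj yk wi wj wk
    hXne hX1 ha hb hCd hCbne h3K hxj0 hyj0
end

section
/- Let F be a field of characteristic ≠ 3 containing a primitive cube root of unity ζ₃. With P_i, Q_i, R_i as defined (P_i(s) = ((s+ζ₃)^{3i} − (s+ζ₃²)^{3i})/(3(ζ₃−ζ₃²)s(s−1)), Q_i(s) = (((1−ζ₃)/3)(s+ζ₃)^{3i−1} + ((1−ζ₃²)/3)(s+ζ₃²)^{3i−1})/(s−1), R_i(s) = (−1)^i((2ζ₃+1)/3)((s+ζ₃²)^{3i−2} − (s+ζ₃)^{3i−2})), for all integers i, j, k: Q_i(1−s)·R_{j+k}(s) − Q_j(1−s)·R_{i+k}(s) = −3·(−1)^{i+j+k}·(s−1)²·(s²−s+1)^{3j−1}·P_{i−j}(s)·Q_k(s) in F(s). -/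
set_option maxHeartbeats 1000000 in
lemma aux17 {K : Type*} [Field K] (U V x y cc ca cb p1 p2 p3 q1 q2 q3 e1 e2 e3 : K)
    (hu : U ≠ 0) (hv : V ≠ 0) (hx : x ≠ 0) (hy : y ≠ 0) (hcc : cc ≠ 0)
    (h3 : (3 : K) ≠ 0) (hp2 : p2 ≠ 0) (hq2 : q2 ≠ 0) :
    (ca * (e1 * q1 / -V) + cb * (e1 * p1 / -U)) / -x *
        (e2 * e3 * -cc⁻¹ * (q2 * q3 / (V * V) - p2 * p3 / (U * U))) -
      (ca * (e2 * q2 / -V) + cb * (e2 * p2 / -U)) / -x *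
        (e1 * e3 * -cc⁻¹ * (q1 * q3 / (V * V) - p1 * p3 / (U * U))) =
    -3 * (e1 * e2 * e3) * y ^ 2 * (p2 * q2 / (U * V)) *
        ((p1 / p2 - q1 / q2) / (3 * cc * x * y)) *
        ((ca * (p3 / U) + cb * (q3 / V)) / y) := by
  trans (-(e1 * e2 * e3) * (p1 * q2 - p2 * q1) *
      (ca * p3 * x⁻¹ * cc⁻¹ * U⁻¹ * U⁻¹ * V⁻¹ + cb * q3 * x⁻¹ * cc⁻¹ * U⁻¹ * V⁻¹ * V⁻¹))
  · ring
  · rw [div_sub_div _ _ hp2 hq2]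
    have h : -3 * (e1 * e2 * e3) * y ^ 2 * (p2 * q2 / (U * V)) *
        ((p1 * q2 - p2 * q1) / (p2 * q2) / (3 * cc * x * y)) *
        ((ca * (p3 / U) + cb * (q3 / V)) / y)
        = (3 * (3 : K)⁻¹) * (y * y⁻¹) * (y * y⁻¹) * (p2 * p2⁻¹) * (q2 * q2⁻¹) *
          (-(e1 * e2 * e3) * (p1 * q2 - p2 * q1) *
            (ca * p3 * x⁻¹ * cc⁻¹ * U⁻¹ * U⁻¹ * V⁻¹ + cb * q3 * x⁻¹ * cc⁻¹ * U⁻¹ * V⁻¹ * V⁻¹)) := by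
      ring
    rw [h, mul_inv_cancel₀ h3, mul_inv_cancel₀ hy, mul_inv_cancel₀ hp2, mul_inv_cancel₀ hq2]
    ring


set_option maxHeartbeats 1000000 in
theorem stmt17 (F : Type*) [Field F] (h3 : ringChar F ≠ 3)
    (ζ : F) (hζ : IsPrimitiveRoot ζ 3)
    (P Q Qm R : ℤ → RatFunc F)
    (hP : ∀ i : ℤ, P i =
      ((RatFunc.X + RatFunc.C ζ) ^ (3 * i) - (RatFunc.X + RatFunc.C (ζ ^ 2)) ^ (3 * i)) /
        (3 * (RatFunc.C ζ - RatFunc.C (ζ ^ 2)) * RatFunc.X * (RatFunc.X - 1)))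
    (hQ : ∀ i : ℤ, Q i =
      (RatFunc.C ((1 - ζ) / 3) * (RatFunc.X + RatFunc.C ζ) ^ (3 * i - 1) +
        RatFunc.C ((1 - ζ ^ 2) / 3) * (RatFunc.X + RatFunc.C (ζ ^ 2)) ^ (3 * i - 1)) /
        (RatFunc.X - 1))
    (hQm : ∀ i : ℤ, Qm i =
      (RatFunc.C ((1 - ζ) / 3) * ((1 - RatFunc.X) + RatFunc.C ζ) ^ (3 * i - 1) +
        RatFunc.C ((1 - ζ ^ 2) / 3) * ((1 - RatFunc.X) + RatFunc.C (ζ ^ 2)) ^ (3 * i - 1)) /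
        ((1 - RatFunc.X) - 1))
    (hR : ∀ i : ℤ, R i =
      (-1 : RatFunc F) ^ i * RatFunc.C ((2 * ζ + 1) / 3) *
        ((RatFunc.X + RatFunc.C (ζ ^ 2)) ^ (3 * i - 2) - (RatFunc.X + RatFunc.C ζ) ^ (3 * i - 2)))
    (i j k : ℤ) :
    Qm i * R (j + k) - Qm j * R (i + k) =
      -3 * (-1 : RatFunc F) ^ (i + j + k) * (RatFunc.X - 1) ^ 2 *
        (RatFunc.X ^ 2 - RatFunc.X + 1) ^ (3 * j - 1) * P (i - j) * Q k := by
  -- Facts in F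
  have h1 : ζ ^ 3 = 1 := hζ.pow_eq_one
  have hne1 : ζ ≠ 1 := hζ.ne_one (by norm_num)
  have hsum : ζ ^ 2 + ζ + 1 = 0 := by
    have h0 : (ζ - 1) * (ζ ^ 2 + ζ + 1) = 0 := by linear_combination h1
    rcases mul_eq_zero.mp h0 with h | h
    · exact absurd (by linear_combination h) hne1
    · exact h
  have hz0 : ζ ≠ 0 := hζ.ne_zero (by norm_num)
  have hc : ζ - ζ ^ 2 ≠ 0 := by
    intro h
    exact hne1 (mul_left_cancel₀ hz0 (show ζ * 1 = ζ * ζ by linear_combination h)).symm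
  have h3F : (3 : F) ≠ 0 := by
    intro h
    apply hc
    have hsq : (ζ - ζ ^ 2) ^ 2 = -3 := by linear_combination (ζ - 2) * h1 + hsum
    have : (ζ - ζ ^ 2) ^ 2 = 0 := by rw [hsq, h]; ring
    exact pow_eq_zero_iff (by norm_num) |>.mp this
  have hgF : (2 * ζ + 1) / 3 = -(ζ - ζ ^ 2)⁻¹ := by
    field_simp
    linear_combination (-2) * h1 + hsum
  -- Facts in RatFunc F
  have hsC : (RatFunc.C (ζ ^ 2) + RatFunc.C ζ + 1 : RatFunc F) = 0 := by
    have := congrArg RatFunc.C hsum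
    rwa [map_add, map_add, map_one, map_zero] at this
  have hC3 : RatFunc.C ζ * RatFunc.C (ζ ^ 2) = (1 : RatFunc F) := by
    rw [← map_mul, show ζ * ζ ^ 2 = ζ ^ 3 by ring, h1, map_one]
  have hXC : ∀ c : F, (RatFunc.X + RatFunc.C c : RatFunc F) ≠ 0 := by
    intro c
    have : (Polynomial.X + Polynomial.C c : Polynomial F) ≠ 0 := Polynomial.X_add_C_ne_zero c
    simpa [RatFunc.algebraMap_X, RatFunc.algebraMap_C] using RatFunc.algebraMap_ne_zero this
  have hu : (RatFunc.X + RatFunc.C ζ : RatFunc F) ≠ 0 := hXC ζ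
  have hv : (RatFunc.X + RatFunc.C (ζ ^ 2) : RatFunc F) ≠ 0 := hXC (ζ ^ 2)
  have hX : (RatFunc.X : RatFunc F) ≠ 0 := RatFunc.X_ne_zero
  have hX1 : (RatFunc.X - 1 : RatFunc F) ≠ 0 := by
    have := hXC (-1)
    simpa [map_neg, map_one, sub_eq_add_neg] using this
  have Cinj : Function.Injective (RatFunc.C : F →+* RatFunc F) := RingHom.injective _
  have hcC : (RatFunc.C ζ - RatFunc.C (ζ ^ 2) : RatFunc F) ≠ 0 := by
    rw [← map_sub]
    intro h
    exact hc (Cinj (by rw [h, map_zero]))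
  have h3C : (3 : RatFunc F) ≠ 0 := by
    intro h
    exact h3F (Cinj (show RatFunc.C (3 : F) = RatFunc.C 0 by rw [map_ofNat, map_zero, h]))
  have hγC : RatFunc.C ((2 * ζ + 1) / 3) =
      -(RatFunc.C ζ - RatFunc.C (ζ ^ 2) : RatFunc F)⁻¹ := by
    rw [hgF, map_neg, map_inv₀, map_sub]
  have hmu : ((1 : RatFunc F) - RatFunc.X) + RatFunc.C ζ
      = -(RatFunc.X + RatFunc.C (ζ ^ 2)) := by linear_combination hsC
  have hmv : ((1 : RatFunc F) - RatFunc.X) + RatFunc.C (ζ ^ 2)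
      = -(RatFunc.X + RatFunc.C ζ) := by linear_combination hsC
  have hm1 : ((1 : RatFunc F) - RatFunc.X) - 1 = -RatFunc.X := by ring
  have huvC : (RatFunc.X ^ 2 - RatFunc.X + 1 : RatFunc F)
      = (RatFunc.X + RatFunc.C ζ) * (RatFunc.X + RatFunc.C (ζ ^ 2)) := by
    linear_combination (-RatFunc.X) * hsC - hC3
  rw [hQm i, hQm j, hR (j + k), hR (i + k), hP (i - j), hQ k, hmu, hmv, hm1, huvC, hγC]
  -- zpow bookkeeping
  have hnu : (-(RatFunc.X + RatFunc.C ζ) : RatFunc F) ≠ 0 := neg_ne_zero.mpr hu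
  have hnv : (-(RatFunc.X + RatFunc.C (ζ ^ 2)) : RatFunc F) ≠ 0 := neg_ne_zero.mpr hv
  have h1n : (-1 : RatFunc F) ≠ 0 := by norm_num
  have huv0 : ((RatFunc.X + RatFunc.C ζ) * (RatFunc.X + RatFunc.C (ζ ^ 2)) : RatFunc F) ≠ 0 :=
    mul_ne_zero hu hv
  have hmw : ∀ (w : RatFunc F) (n : ℤ), (-w) ^ (3 * n) = (-1) ^ n * w ^ (3 * n) := by
    intro w n
    rw [show -w = -1 * w from by ring, mul_zpow]
    congr 1
    rw [zpow_mul]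
    norm_num
  have hu2 : (RatFunc.X + RatFunc.C ζ : RatFunc F) ^ (2 : ℤ)
      = (RatFunc.X + RatFunc.C ζ) * (RatFunc.X + RatFunc.C ζ) := by
    rw [show (2 : ℤ) = 1 + 1 from rfl, zpow_add₀ hu, zpow_one]
  have hv2 : (RatFunc.X + RatFunc.C (ζ ^ 2) : RatFunc F) ^ (2 : ℤ)
      = (RatFunc.X + RatFunc.C (ζ ^ 2)) * (RatFunc.X + RatFunc.C (ζ ^ 2)) := by
    rw [show (2 : ℤ) = 1 + 1 from rfl, zpow_add₀ hv, zpow_one]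
  have hea : ∀ m n : ℤ, (3 * (m + n) : ℤ) = 3 * m + 3 * n := by intros; ring
  have hes : ∀ m n : ℤ, (3 * (m - n) : ℤ) = 3 * m - 3 * n := by intros; ring
  simp only [hea, hes, zpow_sub₀ hu, zpow_sub₀ hv, zpow_sub₀ hnu, zpow_sub₀ hnv,
    zpow_sub₀ huv0, zpow_add₀ hu, zpow_add₀ hv, zpow_add₀ h1n, zpow_one, hu2, hv2, hmw,
    mul_zpow, inv_neg]
  have hAj : (RatFunc.X + RatFunc.C ζ : RatFunc F) ^ (3 * j) ≠ 0 := zpow_ne_zero _ hu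
  have hBj : (RatFunc.X + RatFunc.C (ζ ^ 2) : RatFunc F) ^ (3 * j) ≠ 0 := zpow_ne_zero _ hv
  obtain ⟨p1, hp1⟩ : ∃ t, (RatFunc.X + RatFunc.C ζ) ^ (3 * i) = t := ⟨_, rfl⟩
  obtain ⟨p2, hp2⟩ : ∃ t, (RatFunc.X + RatFunc.C ζ) ^ (3 * j) = t := ⟨_, rfl⟩
  obtain ⟨p3, hp3⟩ : ∃ t, (RatFunc.X + RatFunc.C ζ) ^ (3 * k) = t := ⟨_, rfl⟩
  obtain ⟨q1, hq1⟩ : ∃ t, (RatFunc.X + RatFunc.C (ζ ^ 2)) ^ (3 * i) = t := ⟨_, rfl⟩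
  obtain ⟨q2, hq2⟩ : ∃ t, (RatFunc.X + RatFunc.C (ζ ^ 2)) ^ (3 * j) = t := ⟨_, rfl⟩
  obtain ⟨q3, hq3⟩ : ∃ t, (RatFunc.X + RatFunc.C (ζ ^ 2)) ^ (3 * k) = t := ⟨_, rfl⟩
  obtain ⟨e1, he1⟩ : ∃ t, ((-1 : RatFunc F)) ^ i = t := ⟨_, rfl⟩
  obtain ⟨e2, he2⟩ : ∃ t, ((-1 : RatFunc F)) ^ j = t := ⟨_, rfl⟩
  obtain ⟨e3, he3⟩ : ∃ t, ((-1 : RatFunc F)) ^ k = t := ⟨_, rfl⟩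
  rw [hp2] at hAj
  rw [hq2] at hBj
  rw [hp1, hp2, hp3, hq1, hq2, hq3, he1, he2, he3]
  obtain ⟨cc, hccdef⟩ : ∃ t, (RatFunc.C ζ - RatFunc.C (ζ ^ 2) : RatFunc F) = t := ⟨_, rfl⟩
  rw [hccdef] at hcC ⊢
  obtain ⟨U, hUdef⟩ : ∃ t, (RatFunc.X + RatFunc.C ζ : RatFunc F) = t := ⟨_, rfl⟩
  rw [hUdef] at hu ⊢
  obtain ⟨V, hVdef⟩ : ∃ t, (RatFunc.X + RatFunc.C (ζ ^ 2) : RatFunc F) = t := ⟨_, rfl⟩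
  rw [hVdef] at hv ⊢
  have hC3ne : (RatFunc.C (3 : F) : RatFunc F) ≠ 0 := fun h => h3F (Cinj (by rw [h, map_zero]))
  obtain ⟨x, hxdef⟩ : ∃ t, (RatFunc.X : RatFunc F) = t := ⟨_, rfl⟩
  rw [hxdef] at hX hX1 ⊢
  exact aux17 U V x (x - 1) cc (RatFunc.C ((1 - ζ) / 3)) (RatFunc.C ((1 - ζ ^ 2) / 3))
    p1 p2 p3 q1 q2 q3 e1 e2 e3 hu hv hX hX1 hcC h3C hAj hBj
end
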